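/- Let R be a commutative ring and n a natural number. The polynomial algebra MvPolynomial (Fin n) R is a finitely presented object of the category CommAlgCat R of commutative R-algebras: the functor Hom_{CommAlgCat R}(MvPolynomial (Fin n) R, −) preserves filtered colimits. -/

import Mathlib

open CategoryTheory Limits Opposite

universe u

/-- An object `A` of a category `𝒞` is *finitely presented* if the hom-functor
`Hom_𝒞(A, −)` preserves filtered colimits. -/
def CategoryTheory.IsFinitelyPresentedObj {C : Type*} [Category C] (A : C) : Prop :=
  PreservesFilteredColimits (coyoneda.obj (op A))

/-- The category of commutative `R`-algebras, realized as the full subcategory of the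
category `AlgebraCat R` of `R`-algebras consisting of the commutative ones. -/
abbrev CommAlgCat' (R : Type u) [CommRing R] :=
  CategoryTheory.ObjectProperty.FullSubcategory (fun A : AlgCat.{u} R => ∀ x y : A, x * y = y * x)

/-- A commutative algebra `A`, as an object of `CommAlgCat R`. -/
abbrev CommAlgCat'.of (R : Type u) [CommRing R] (A : Type u) [CommRing A] [Algebra R A] :
    CommAlgCat' R :=
  ⟨AlgCat.of R A, fun x y => mul_comm x y⟩


-- auxiliary: simultaneous equalization of finitely many pairs in a filtered colimit of types
theorem FPaux.exists_map_eq {J : Type u} [Category.{u} J] [IsFiltered J]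
    (G : J ⥤ Type u) {t : Cocone G} (ht : IsColimit t) {k0 : J} :
    ∀ (m : ℕ) (uu vv : Fin m → G.obj k0),
    (∀ i, t.ι.app k0 (uu i) = t.ι.app k0 (vv i)) →
    ∃ (k : J) (f : k0 ⟶ k), ∀ i, G.map f (uu i) = G.map f (vv i) := by
  intro m
  induction m with
  | zero => exact fun uu vv _ => ⟨k0, 𝟙 k0, fun i => i.elim0⟩
  | succ m ih =>
    intro uu vv h
    obtain ⟨k, f, hf⟩ := ih (fun i => uu i.castSucc) (fun i => vv i.castSucc)
      (fun i => h i.castSucc)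
    obtain ⟨k', f', g', hfg⟩ :=
      (Types.FilteredColimit.isColimit_eq_iff G ht).mp (h (Fin.last m))
    set p : k0 ⟶ IsFiltered.coeq f' g' := f' ≫ IsFiltered.coeqHom f' g' with hpdef
    have hp : G.map p (uu (Fin.last m)) = G.map p (vv (Fin.last m)) := by
      have hc : p = g' ≫ IsFiltered.coeqHom f' g' := IsFiltered.coeq_condition f' g'
      calc G.map p (uu (Fin.last m))
          = G.map (IsFiltered.coeqHom f' g') (G.map f' (uu (Fin.last m))) := by
            rw [hpdef, FunctorToTypes.map_comp_apply]
        _ = G.map (IsFiltered.coeqHom f' g') (G.map g' (vv (Fin.last m))) := by rw [hfg]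
        _ = G.map p (vv (Fin.last m)) := by rw [hc, FunctorToTypes.map_comp_apply]
    obtain ⟨d, q, r, -⟩ := IsFilteredOrEmpty.cocone_objs k (IsFiltered.coeq f' g')
    obtain ⟨e, w, hw⟩ := IsFilteredOrEmpty.cocone_maps (f ≫ q) (p ≫ r)
    refine ⟨e, f ≫ q ≫ w, fun i => ?_⟩
    refine Fin.lastCases ?_ ?_ i
    · have h1 : f ≫ q ≫ w = p ≫ r ≫ w := by
        rw [← Category.assoc, hw, Category.assoc]
      rw [h1]; simp only [FunctorToTypes.map_comp_apply, hp]
    · intro i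
      simp only [FunctorToTypes.map_comp_apply, hf]


/-- For a commutative ring `R` and `n : ℕ`, the polynomial algebra `R[x₁,…,xₙ]` is a
finitely presented object of the category `CommAlgCat' R` of commutative `R`-algebras. -/
theorem mvPolynomial_isFinitelyPresentedObj (R : Type u) [CommRing R] (n : ℕ) :
    CategoryTheory.IsFinitelyPresentedObj (CommAlgCat'.of R (MvPolynomial (Fin n) R)) := by
  constructor
  intro J _ _
  constructor
  intro K
  -- the diagram of underlying commutative rings
  letI cri : ∀ j : J, CommRing ((K.obj j).obj : Type u) := fun j =>
    { (inferInstance : Ring ((K.obj j).obj : Type u)) with mul_comm := (K.obj j).property }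
  let K' : J ⥤ CommRingCat.{u} :=
    { obj := fun j => CommRingCat.of ((K.obj j).obj : Type u)
      map := fun {a b} f => CommRingCat.ofHom (K.map f).hom.hom.toRingHom
      map_id := fun j => by rw [CategoryTheory.Functor.map_id]; rfl
      map_comp := fun f g => by rw [CategoryTheory.Functor.map_comp]; rfl }
  obtain ⟨j0⟩ : Nonempty J := IsFiltered.nonempty
  let L := colimit K'
  let tC := (forget CommRingCat).mapCocone (colimit.cocone K')
  have htC : IsColimit tC := isColimitOfPreserves (forget CommRingCat) (colimit.isColimit K')
  letI algL : Algebra R (L : Type u) :=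
    RingHom.toAlgebra (((colimit.ι K' j0).hom : K'.obj j0 →+* L).comp
      (algebraMap R ((K.obj j0).obj : Type u)))
  have hstep : ∀ {a b : J} (h : a ⟶ b),
      ((colimit.ι K' a).hom : K'.obj a →+* L).comp (algebraMap R ((K.obj a).obj : Type u)) =
      ((colimit.ι K' b).hom : K'.obj b →+* L).comp (algebraMap R ((K.obj b).obj : Type u)) := by
    intro a b h
    have e1 : ((colimit.ι K' a).hom : K'.obj a →+* L) =
        (((colimit.ι K' b).hom : K'.obj b →+* L)).comp ((K.map h).hom.hom.toRingHom) := by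
      rw [← colimit.w K' h]; rfl
    rw [e1, RingHom.comp_assoc]
    congr 1
    exact AlgHom.comp_algebraMap (K.map h).hom.hom
  have halg : ∀ j : J,
      ((colimit.ι K' j).hom : K'.obj j →+* L).comp (algebraMap R ((K.obj j).obj : Type u)) =
      algebraMap R (L : Type u) := by
    intro j
    obtain ⟨k, f, g, -⟩ := IsFilteredOrEmpty.cocone_objs j0 j
    rw [RingHom.algebraMap_toAlgebra]
    exact (hstep g).trans (hstep f).symm
  let ιa : ∀ j : J, ((K.obj j).obj : Type u) →ₐ[R] (L : Type u) := fun j =>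
    { toRingHom := ((colimit.ι K' j).hom : K'.obj j →+* L)
      commutes' := fun r => RingHom.congr_fun (halg j) r }
  have hnat : ∀ {a b : J} (h : a ⟶ b) (x : (K.obj a).obj),
      colimit.ι K' b ((K.map h).hom x) = colimit.ι K' a x := by
    intro a b h x
    exact RingHom.congr_fun (congrArg CommRingCat.Hom.hom (colimit.w K' h)) x
  have hcommL : ∀ x y : (L : Type u), x * y = y * x := by
    intro x y
    obtain ⟨a, xa, hxa⟩ := Types.jointly_surjective _ htC x
    obtain ⟨b, yb, hyb⟩ := Types.jointly_surjective _ htC y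
    obtain ⟨k, f, g, -⟩ := IsFilteredOrEmpty.cocone_objs a b
    have hx : x = colimit.ι K' k (K'.map f xa) := by
      rw [← hxa]; exact (ConcreteCategory.congr_hom (tC.w f) xa).symm
    have hy : y = colimit.ι K' k (K'.map g yb) := by
      rw [← hyb]; exact (ConcreteCategory.congr_hom (tC.w g) yb).symm
    rw [hx, hy, ← map_mul, ← map_mul, mul_comm]
  let Lobj : CommAlgCat' R := ⟨AlgCat.of R (L : Type u), hcommL⟩
  let c' : Cocone K :=
    { pt := Lobj
      ι := { app := fun j => ObjectProperty.homMk (AlgCat.ofHom (ιa j))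
             naturality := fun {a b} h => by
               ext x
               exact hnat h x } }
  -- the commutative ring cocone obtained from a cocone in `CommAlgCat' R`
  have hc' : IsColimit c' := by
    let hcL := colimit.isColimit K'
    let mkC : ∀ s : Cocone K, Cocone K' := fun s =>
      letI : CommRing (s.pt.obj : Type u) :=
        { (inferInstance : Ring (s.pt.obj : Type u)) with mul_comm := s.pt.property }
      { pt := CommRingCat.of (s.pt.obj : Type u)
        ι := { app := fun j => CommRingCat.ofHom (s.ι.app j).hom.hom.toRingHom
               naturality := fun {a b} h => by
                 have := s.ι.naturality h
                 ext x
                 have h2 := congrArg (fun f => f.hom.hom) this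
                 exact AlgHom.congr_fun h2 x } }
    refine { desc := fun s => ?_, fac := fun s j => ?_, uniq := fun s m hm => ?_ }
    · letI : CommRing (s.pt.obj : Type u) :=
        { (inferInstance : Ring (s.pt.obj : Type u)) with mul_comm := s.pt.property }
      refine ObjectProperty.homMk <| AlgCat.ofHom
        { toRingHom := ((colimit.desc K' (mkC s)).hom : (L : Type u) →+* (s.pt.obj : Type u))
          commutes' := fun r => ?_ }
      have h2 := RingHom.congr_fun (congrArg CommRingCat.Hom.hom (hcL.fac (mkC s) j0))
        (algebraMap R ((K.obj j0).obj : Type u) r)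
      exact h2.trans ((s.ι.app j0).hom.hom.commutes r)
    · ext x
      exact RingHom.congr_fun (congrArg CommRingCat.Hom.hom (hcL.fac (mkC s) j)) x
    · letI : CommRing (s.pt.obj : Type u) :=
        { (inferInstance : Ring (s.pt.obj : Type u)) with mul_comm := s.pt.property }
      ext x
      have hL := hcL.uniq (mkC s) (CommRingCat.ofHom m.hom.hom.toRingHom) (fun j => by
        refine CommRingCat.hom_ext (RingHom.ext fun y => ?_)
        show m.hom ((ιa j) y) = (s.ι.app j).hom y
        exact AlgHom.congr_fun (congrArg (fun f => f.hom.hom) (hm j)) y)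
      exact RingHom.congr_fun (congrArg CommRingCat.Hom.hom hL) x
  have hFc' : IsColimit ((coyoneda.obj (op (CommAlgCat'.of R (MvPolynomial (Fin n) R)))).mapCocone c') := by
    apply Types.FilteredColimit.isColimitOf
    · -- joint surjectivity
      classical
      intro φ
      have hx : ∀ i : Fin n, ∃ (j : J) (y : (K'.obj j : Type u)),
          tC.ι.app j y = φ.hom (MvPolynomial.X i) :=
        fun i => Types.jointly_surjective _ htC _
      choose jx ax hax using hx
      obtain ⟨S, hS⟩ := IsFiltered.sup_objs_exists (Finset.image jx Finset.univ)
      have hmap : ∀ i : Fin n, Nonempty (jx i ⟶ S) :=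
        fun i => hS (Finset.mem_image_of_mem _ (Finset.mem_univ i))
      let fx : ∀ i : Fin n, jx i ⟶ S := fun i => (hmap i).some
      let b : Fin n → ((K.obj S).obj : Type u) := fun i => K'.map (fx i) (ax i)
      refine ⟨S, ObjectProperty.homMk (AlgCat.ofHom (MvPolynomial.aeval b)),
        ObjectProperty.hom_ext _ (AlgCat.hom_ext R (MvPolynomial.algHom_ext fun i => ?_))⟩
      show φ.hom (MvPolynomial.X i) = (ιa S) (MvPolynomial.aeval b (MvPolynomial.X i))
      rw [MvPolynomial.aeval_X]
      show φ.hom (MvPolynomial.X i) = colimit.ι K' S (K'.map (fx i) (ax i))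
      rw [← hax i]
      exact (ConcreteCategory.congr_hom (tC.w (fx i)) (ax i)).symm
    · -- joint injectivity
      intro a b ψ₁ ψ₂ hψ
      obtain ⟨k0, f, g, -⟩ := IsFilteredOrEmpty.cocone_objs a b
      have hpt : ∀ m : Fin n,
          tC.ι.app k0 (K'.map f (ψ₁.hom (MvPolynomial.X m))) =
          tC.ι.app k0 (K'.map g (ψ₂.hom (MvPolynomial.X m))) := by
        intro m
        have h3 : (ιa a) (ψ₁.hom (MvPolynomial.X m)) = (ιa b) (ψ₂.hom (MvPolynomial.X m)) :=
          AlgHom.congr_fun (congrArg (fun f => f.hom.hom) hψ) (MvPolynomial.X m)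
        exact (ConcreteCategory.congr_hom (tC.w f) _).trans (h3.trans (ConcreteCategory.congr_hom (tC.w g) _).symm)
      obtain ⟨k, h, hk⟩ := FPaux.exists_map_eq (K' ⋙ forget CommRingCat) htC n
        (fun m => K'.map f (ψ₁.hom (MvPolynomial.X m)))
        (fun m => K'.map g (ψ₂.hom (MvPolynomial.X m))) hpt
      refine ⟨k, f ≫ h, g ≫ h,
        ObjectProperty.hom_ext _ (AlgCat.hom_ext R (MvPolynomial.algHom_ext fun m => ?_))⟩
      show (K'.map (f ≫ h)) (ψ₁.hom (MvPolynomial.X m)) =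
        (K'.map (g ≫ h)) (ψ₂.hom (MvPolynomial.X m))
      rw [K'.map_comp, K'.map_comp]
      exact hk m
  exact preservesColimit_of_preserves_colimit_cocone hc' hFc'
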